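/- Let G be a group generated by a finite symmetric set with word length ℓ, and let H ≤ G be a subgroup. The following are equivalent: (1) there exist constants K, s ≥ 0 such that ‖f‖_h ≤ K·‖f·(1+ℓ)^s‖_{(2,1)} for every finitely supported f : G → ℂ; (2) there exist constants C, D ≥ 0 such that ‖f*ϕ‖_{(2,1)} ≤ C(R+1)^D·‖f‖_{(2,1)}·‖ϕ‖_{(2,1)} for every R ≥ 0, every finitely supported f : G → ℂ supported in B(R), and every finitely supported ϕ : G → ℂ; (3) there exist constants C, D ≥ 0 such that ‖f‖_h ≤ C(R+1)^D·‖f‖_{(2,1)} for every R ≥ 0 and every finitely supportedف f : G → ℂ supported in B(R); (4) there exist constants C, D ≥ 0 such that for every R ≥ 0, every finitely supported nonnegative f : G → ℝ supported in B(R), and all finitely supported nonnegative ϕ, ψ : G → ℝ, one has ∑_{h∈H} ((f*ϕ)^⋆ * ψ^⋆)(h) ≤ C(R+1)^D·‖f‖_{(2,1)}·‖ϕ‖_{(2,1)}·‖ψ^⋆‖_{(2,1)}, where g^⋆(x) := g(x⁻¹). -/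

import Mathlib

open scoped BigOperators

attribute [local instance] Classical.propDecidable

section Defs

variable {G : Type*} [Group G]

/-- Word length with respect to a generating set `S`. -/
noncomputable def wordLength (S : Set G) (x : G) : ℕ :=
  sInf {n | ∃ l : List G, (∀ s ∈ l, s ∈ S) ∧ l.length = n ∧ l.prod = x}

/-- Convolution of finitely supported functions:
`(f * ϕ) x = ∑ z, f z * ϕ (z⁻¹ * x)`. -/
noncomputable def conv {k : Type*} [Semiring k] (f ϕ : G →₀ k) : G →₀ k :=
  f.sum fun z c => c • Finsupp.mapDomain (fun x => z * x) ϕ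

/-- `n`-fold convolution power. -/
noncomputable def convPow {k : Type*} [Semiring k] (f : G →₀ k) : ℕ → G →₀ k
  | 0 => Finsupp.single 1 1
  | n + 1 => conv f (convPow f n)

/-- ℓ² norm of a finitely supported function. -/
noncomputable def l2Norm {α k : Type*} [NormedAddCommGroup k] (f : α →₀ k) : ℝ :=
  Real.sqrt (∑ x ∈ f.support, ‖f x‖ ^ 2)

/-- ℓ¹ norm of a finitely supported function. -/
noncomputable def l1Norm {α k : Type*} [NormedAddCommGroup k] (f : α →₀ k) : ℝ :=
  ∑ x ∈ f.support, ‖f x‖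

/-- The hybrid `(2,1)` norm with respect to the subgroup `H`:
`‖f‖_{(2,1)} = sqrt (∑_{gH ∈ G/H} (∑_{x ∈ gH} |f x|)²)`. -/
noncomputable def l21Norm (H : Subgroup G) {k : Type*} [NormedAddCommGroup k]
    (f : G →₀ k) : ℝ :=
  l2Norm (Finsupp.mapDomain (QuotientGroup.mk : G → G ⧸ H) (f.mapRange norm norm_zero))

/-- Hybrid operator norm `‖f‖_h`. -/
noncomputable def hybridOpNorm (H : Subgroup G) (f : G →₀ ℂ) : ℝ :=
  sSup {c : ℝ | ∃ ϕ : G →₀ ℂ, l21Norm H ϕ ≤ 1 ∧ c = l21Norm H (conv f ϕ)}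

/-- Regular operator norm `‖f‖_*`. -/
noncomputable def regOpNorm (f : G →₀ ℂ) : ℝ :=
  sSup {c : ℝ | ∃ ξ : G →₀ ℂ, l2Norm ξ ≤ 1 ∧ c = l2Norm (conv f ξ)}

/-- The quasi-regular representation:
`(λ_{G/H}(f) ξ)(gH) = ∑ z, f z * ξ (z⁻¹ g H)`. -/
noncomputable def quasiReg (H : Subgroup G) (f : G →₀ ℂ) (ξ : (G ⧸ H) →₀ ℂ) :
    (G ⧸ H) →₀ ℂ :=
  f.sum fun z c => c • Finsupp.mapDomain (fun q => z • q) ξ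

/-- Quasi-regular operator norm `‖λ_{G/H}(f)‖`. -/
noncomputable def quasiRegOpNorm (H : Subgroup G) (f : G →₀ ℂ) : ℝ :=
  sSup {c : ℝ | ∃ ξ : (G ⧸ H) →₀ ℂ, l2Norm ξ ≤ 1 ∧ c = l2Norm (quasiReg H f ξ)}

/-- Embed a real finitely supported function into the complex valued ones. -/
noncomputable def toC {α : Type*} (f : α →₀ ℝ) : α →₀ ℂ :=
  f.mapRange Complex.ofReal Complex.ofReal_zero

/-- Pointwise weight of a function by `(1 + ℓ)^s`. -/
noncomputable def weight (S : Set G) (s : ℝ) (f : G →₀ ℂ) : G →₀ ℂ where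
  support := f.support
  toFun x := ((((1 : ℝ) + (wordLength S x : ℝ)) ^ s : ℝ) : ℂ) * f x
  mem_support_toFun x := by
    simp only [Finsupp.mem_support_iff]
    have hpos : (0 : ℝ) < ((1 : ℝ) + (wordLength S x : ℝ)) ^ s :=
      Real.rpow_pos_of_pos (by positivity) s
    constructor
    · intro hf h
      rcases mul_eq_zero.mp h with h1 | h2
      · exact hpos.ne' (by exact_mod_cast h1)
      · exact hf h2
    · intro h hf
      exact h (by rw [hf, mul_zero])

/-- The involution `f⋆ x = f x⁻¹`. -/
noncomputable def starFun {k : Type*} [Zero k] (f : G →₀ k) : G →₀ k :=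
  Finsupp.equivMapDomain (Equiv.inv G) f

/-- Sum of the values of `g` over the subgroup `H`. -/
noncomputable def sumOverSubgroup (H : Subgroup G) (g : G →₀ ℝ) : ℝ :=
  ∑ x ∈ g.support.filter (fun x => x ∈ H), g x

/-- `f` is supported in the ball of radius `R` for the word length of `S`. -/
def supportedInBall (S : Set G) (R : ℕ) {k : Type*} [Zero k] (f : G →₀ k) : Prop :=
  ∀ x ∈ f.support, wordLength S x ≤ R

/-- Rapid decay property for the pair `(G, H)`. -/
def PairRD (S : Set G) (H : Subgroup G) : Prop :=
  ∃ C : ℝ, ∃ D : ℕ, 0 ≤ C ∧ ∀ (R : ℕ) (f ϕ : G →₀ ℂ), supportedInBall S R f →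
    l21Norm H (conv f ϕ) ≤ C * ((R : ℝ) + 1) ^ D * l21Norm H f * l21Norm H ϕ

/-- Rapid decay property for the group `G`. -/
def GroupRD (S : Set G) : Prop :=
  ∃ C : ℝ, ∃ D : ℕ, 0 ≤ C ∧ ∀ (R : ℕ) (f ϕ : G →₀ ℂ), supportedInBall S R f →
    l2Norm (conv f ϕ) ≤ C * ((R : ℝ) + 1) ^ D * l2Norm f * l2Norm ϕ

/-- Polynomial growth of a subgroup for the induced length. -/
def polyGrowthSubgroup (S : Set G) (H : Subgroup G) : Prop :=
  ∃ C : ℝ, ∃ D : ℕ, 0 ≤ C ∧ ∀ R : ℕ,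
    (Set.ncard {x : G | x ∈ H ∧ wordLength S x ≤ R} : ℝ) ≤ C * ((R : ℝ) + 1) ^ D

/-- Polynomial growth of the coset space `G/H`. -/
def polyGrowthQuotient (S : Set G) (H : Subgroup G) : Prop :=
  ∃ C : ℝ, ∃ D : ℕ, 0 ≤ C ∧ ∀ R : ℕ,
    (Set.ncard ((QuotientGroup.mk : G → G ⧸ H) '' {x : G | wordLength S x ≤ R}) : ℝ) ≤
      C * ((R : ℝ) + 1) ^ D

/-- Co-amenability of `H` in `G`: Følner condition for the left action on `G/H`. -/
def Coamenable (H : Subgroup G) : Prop :=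
  ∀ ε : ℝ, 0 < ε → ∀ F : Finset G, ∃ V : Finset (G ⧸ H), V.Nonempty ∧
    ((symmDiff (Finset.image₂ (· • ·) F V) V).card : ℝ) ≤ ε * (V.card : ℝ)

/-- Matrix coefficient `⟨λ_{G/H}(γ) ξ, η⟩` of the quasi-regular representation
on `ℓ²(G/H)`. -/
noncomputable def qrCoeff (H : Subgroup G) (γ : G)
    (ξ η : lp (fun _ : G ⧸ H => ℂ) 2) : ℂ :=
  ∑' q : G ⧸ H, ξ (γ⁻¹ • q) * (starRingEnd ℂ) (η q)

/-- The spectral radius of the random walk induced on `G/H`: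
`ρ = limsup P_{2n}(H,H)^{1/(2n)}`. -/
noncomputable def specRadQuot (H : Subgroup G) (μ : G →₀ ℝ) : ℝ :=
  Filter.limsup (fun n : ℕ =>
    (sumOverSubgroup H (convPow μ (2 * n))) ^ ((1 : ℝ) / (2 * (n : ℝ)))) Filter.atTop

end Defs
section Lemmas

open Finsupp

variable {G : Type*} [Group G] (H : Subgroup G)

lemma mapDomain_apply_eq_sum {α β M : Type*} [AddCommMonoid M] (g : α → β) (v : α →₀ M) (b : β) :
    Finsupp.mapDomain g v b = ∑ a ∈ v.support, if g a = b then v a else 0 := by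
  rw [Finsupp.mapDomain, Finsupp.sum_apply]
  exact Finset.sum_congr rfl fun a _ => Finsupp.single_apply

lemma l2Norm_nonneg {α k : Type*} [NormedAddCommGroup k] (f : α →₀ k) : 0 ≤ l2Norm f :=
  Real.sqrt_nonneg _

lemma l2Norm_eq_sum {α k : Type*} [NormedAddCommGroup k] (f : α →₀ k) {s : Finset α}
    (hs : f.support ⊆ s) : l2Norm f = Real.sqrt (∑ x ∈ s, ‖f x‖ ^ 2) := by
  unfold l2Norm
  congr 1
  refine Finset.sum_subset hs fun x _ hx => ?_
  rw [Finsupp.notMem_support_iff.mp hx]; simp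

/-- the coset-sum transform -/
noncomputable def Tq (H : Subgroup G) {k : Type*} [NormedAddCommGroup k] (f : G →₀ k) :
    (G ⧸ H) →₀ ℝ :=
  Finsupp.mapDomain (QuotientGroup.mk : G → G ⧸ H) (f.mapRange norm norm_zero)

lemma l21Norm_eq_l2 {k : Type*} [NormedAddCommGroup k] (f : G →₀ k) :
    l21Norm H f = l2Norm (Tq H f) := rfl

lemma Tq_apply' {k : Type*} [NormedAddCommGroup k] (f : G →₀ k) {s : Finset G}
    (hs : f.support ⊆ s) (q : G ⧸ H) :
    Tq H f q = ∑ x ∈ s, if (QuotientGroup.mk x : G ⧸ H) = q then ‖f x‖ else 0 := by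
  rw [Tq, _root_.mapDomain_apply_eq_sum]
  simp_rw [Finsupp.mapRange_apply]
  convert Finset.sum_subset (M := ℝ) (f := fun a => if (QuotientGroup.mk a : G ⧸ H) = q then ‖f a‖ else 0) ((Finsupp.support_mapRange (f := (norm : k → ℝ)) (hf := norm_zero) (g := f)).trans hs) ?_ using 3
  intro x _ hx
  have : ‖f x‖ = 0 := by
    by_contra h
    exact hx (by simp [Finsupp.mem_support_iff, Finsupp.mapRange_apply, h])
  rw [this]
  simp

lemma Tq_nonneg {k : Type*} [NormedAddCommGroup k] (f : G →₀ k) (q : G ⧸ H) :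
    0 ≤ Tq H f q := by
  rw [Tq_apply' H f (le_refl f.support) q]
  exact Finset.sum_nonneg fun x _ => by split <;> positivity

lemma Tq_mono {k k' : Type*} [NormedAddCommGroup k] [NormedAddCommGroup k']
    (f : G →₀ k) (g : G →₀ k') (h : ∀ x, ‖f x‖ ≤ ‖g x‖) (q : G ⧸ H) :
    Tq H f q ≤ Tq H g q := by
  rw [Tq_apply' H f (Finset.subset_union_left (s₂ := g.support)) q,
    Tq_apply' H g (Finset.subset_union_right (s₁ := f.support)) q]
  refine Finset.sum_le_sum fun x _ => ?_
  split
  · exact h x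
  · exact le_refl 0

lemma l2Norm_mono {α k k' : Type*} [NormedAddCommGroup k] [NormedAddCommGroup k']
    (f : α →₀ k) (g : α →₀ k') (h : ∀ x, ‖f x‖ ≤ ‖g x‖) : l2Norm f ≤ l2Norm g := by
  rw [l2Norm_eq_sum f (Finset.subset_union_left (s₂ := g.support)),
    l2Norm_eq_sum g (Finset.subset_union_right (s₁ := f.support))]
  refine Real.sqrt_le_sqrt (Finset.sum_le_sum fun x _ => ?_)
  exact pow_le_pow_left₀ (norm_nonneg _) (h x) 2

lemma l21Norm_nonneg {k : Type*} [NormedAddCommGroup k] (f : G →₀ k) : 0 ≤ l21Norm H f :=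
  l2Norm_nonneg _

lemma l21Norm_mono {k k' : Type*} [NormedAddCommGroup k] [NormedAddCommGroup k']
    (f : G →₀ k) (g : G →₀ k') (h : ∀ x, ‖f x‖ ≤ ‖g x‖) : l21Norm H f ≤ l21Norm H g := by
  rw [l21Norm_eq_l2, l21Norm_eq_l2]
  refine l2Norm_mono _ _ fun q => ?_
  rw [Real.norm_of_nonneg (Tq_nonneg H f q), Real.norm_of_nonneg (Tq_nonneg H g q)]
  exact Tq_mono H f g h q

lemma l21Norm_zero {k : Type*} [NormedAddCommGroup k] : l21Norm H (0 : G →₀ k) = 0 := by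
  rw [l21Norm_eq_l2]
  have : Tq H (0 : G →₀ k) = 0 := by
    ext q; rw [Tq_apply' H 0 (le_refl _) q]; simp
  rw [this]
  simp [l2Norm]

end Lemmas
section Lemmas2

open Finsupp

variable {G : Type*} [Group G] (H : Subgroup G)

lemma l2Norm_smul_real {α : Type*} (r : ℝ) (hr : 0 ≤ r) (v : α →₀ ℝ) :
    l2Norm (r • v) = r * l2Norm v := by
  rw [l2Norm_eq_sum (r • v) (Finsupp.support_smul (b := r) (g := v)), l2Norm]
  have : ∀ x ∈ v.support, ‖(r • v) x‖ ^ 2 = r ^ 2 * ‖v x‖ ^ 2 := by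
    intro x _
    rw [Finsupp.smul_apply, smul_eq_mul, norm_mul, mul_pow, Real.norm_of_nonneg hr]
  rw [Finset.sum_congr rfl this, ← Finset.mul_sum, Real.sqrt_mul (by positivity),
    Real.sqrt_sq hr]

lemma Tq_smul (c : ℂ) (f : G →₀ ℂ) : Tq H (c • f) = ‖c‖ • Tq H f := by
  ext q
  rw [Finsupp.smul_apply, Tq_apply' H (c • f) (Finsupp.support_smul (b := c) (g := f)) q,
    Tq_apply' H f (le_refl _) q, smul_eq_mul, Finset.mul_sum]
  refine Finset.sum_congr rfl fun x _ => ?_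
  rw [Finsupp.smul_apply, smul_eq_mul, norm_mul]
  split <;> simp

lemma l21Norm_smul (c : ℂ) (f : G →₀ ℂ) : l21Norm H (c • f) = ‖c‖ * l21Norm H f := by
  rw [l21Norm_eq_l2, l21Norm_eq_l2, Tq_smul, l2Norm_smul_real _ (norm_nonneg c)]

lemma apply_le_l2Norm {α k : Type*} [NormedAddCommGroup k] (v : α →₀ k) (q : α) :
    ‖v q‖ ≤ l2Norm v := by
  by_cases hq : q ∈ v.support
  · rw [l2Norm]
    have h1 : ‖v q‖ ^ 2 ≤ ∑ x ∈ v.support, ‖v x‖ ^ 2 :=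
      Finset.single_le_sum (f := fun x => ‖v x‖ ^ 2) (fun x _ => by positivity) hq
    calc ‖v q‖ = Real.sqrt (‖v q‖ ^ 2) := by rw [Real.sqrt_sq (norm_nonneg _)]
    _ ≤ _ := Real.sqrt_le_sqrt h1
  · rw [Finsupp.notMem_support_iff.mp hq]
    simpa using l2Norm_nonneg v

lemma l21Norm_pos {k : Type*} [NormedAddCommGroup k] (f : G →₀ k) (hf : f ≠ 0) :
    0 < l21Norm H f := by
  obtain ⟨x, hx⟩ : ∃ x, f x ≠ 0 := by
    by_contra h
    push_neg at h
    exact hf (Finsupp.ext h)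
  have h1 : ‖f x‖ ≤ Tq H f (QuotientGroup.mk x) := by
    rw [Tq_apply' H f (le_refl _) _]
    refine Finset.single_le_sum (f := fun y => if (QuotientGroup.mk y : G ⧸ H) = QuotientGroup.mk x then ‖f y‖ else 0)
      (fun y _ => by split <;> positivity) (Finsupp.mem_support_iff.mpr hx) |>.trans_eq' ?_
    simp
  have h2 : (0:ℝ) < ‖f x‖ := norm_pos_iff.mpr hx
  calc (0:ℝ) < ‖f x‖ := h2
  _ ≤ Tq H f (QuotientGroup.mk x) := h1
  _ ≤ ‖Tq H f (QuotientGroup.mk x)‖ := le_abs_self _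
  _ ≤ l2Norm (Tq H f) := apply_le_l2Norm _ _
  _ = l21Norm H f := rfl

lemma l2_triangle_of_le {α : Type*} (a b c : α →₀ ℝ) (ha : ∀ q, 0 ≤ a q) (hb : ∀ q, 0 ≤ b q)
    (hc : ∀ q, 0 ≤ c q) (h : ∀ q, a q ≤ b q + c q) : l2Norm a ≤ l2Norm b + l2Norm c := by
  classical
  set s := a.support ∪ b.support ∪ c.support with hs
  have hsa : a.support ⊆ s := Finset.subset_union_left.trans Finset.subset_union_left
  have hsb : b.support ⊆ s := Finset.subset_union_right.trans Finset.subset_union_left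
  have hsc : c.support ⊆ s := Finset.subset_union_right
  rw [l2Norm_eq_sum a hsa, l2Norm_eq_sum b hsb, l2Norm_eq_sum c hsc]
  set X := Real.sqrt (∑ x ∈ s, ‖b x‖ ^ 2)
  set Y := Real.sqrt (∑ x ∈ s, ‖c x‖ ^ 2)
  have hX : 0 ≤ X := Real.sqrt_nonneg _
  have hY : 0 ≤ Y := Real.sqrt_nonneg _
  have key : ∑ x ∈ s, ‖a x‖ ^ 2 ≤ (X + Y) ^ 2 := by
    have h1 : ∑ x ∈ s, ‖a x‖ ^ 2 ≤ ∑ x ∈ s, (‖b x‖ ^ 2 + 2 * (‖b x‖ * ‖c x‖) + ‖c x‖ ^ 2) := by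
      refine Finset.sum_le_sum fun x _ => ?_
      have : ‖a x‖ ≤ ‖b x‖ + ‖c x‖ := by
        rw [Real.norm_of_nonneg (ha x), Real.norm_of_nonneg (hb x), Real.norm_of_nonneg (hc x)]
        exact h x
      calc ‖a x‖ ^ 2 ≤ (‖b x‖ + ‖c x‖) ^ 2 := by
            exact pow_le_pow_left₀ (norm_nonneg _) this 2
      _ = _ := by ring
    have h2 : ∑ x ∈ s, ‖b x‖ * ‖c x‖ ≤ X * Y := Real.sum_mul_le_sqrt_mul_sqrt s _ _
    have h3 : X ^ 2 = ∑ x ∈ s, ‖b x‖ ^ 2 := Real.sq_sqrt (by positivity)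
    have h4 : Y ^ 2 = ∑ x ∈ s, ‖c x‖ ^ 2 := Real.sq_sqrt (by positivity)
    calc ∑ x ∈ s, ‖a x‖ ^ 2 ≤ _ := h1
    _ = X ^ 2 + 2 * (∑ x ∈ s, ‖b x‖ * ‖c x‖) + Y ^ 2 := by
        rw [h3, h4]
        rw [Finset.sum_add_distrib, Finset.sum_add_distrib, ← Finset.mul_sum]
    _ ≤ X ^ 2 + 2 * (X * Y) + Y ^ 2 := by nlinarith
    _ = (X + Y) ^ 2 := by ring
  calc Real.sqrt (∑ x ∈ s, ‖a x‖ ^ 2) ≤ Real.sqrt ((X + Y) ^ 2) := Real.sqrt_le_sqrt key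
  _ = X + Y := Real.sqrt_sq (by positivity)

lemma Tq_add_le {k : Type*} [NormedAddCommGroup k] (f g : G →₀ k) (q : G ⧸ H) :
    Tq H (f + g) q ≤ Tq H f q + Tq H g q := by
  have hsub : (f + g).support ⊆ f.support ∪ g.support := Finsupp.support_add
  rw [Tq_apply' H (f + g) hsub q,
    Tq_apply' H f (Finset.subset_union_left (s₂ := g.support)) q,
    Tq_apply' H g (Finset.subset_union_right (s₁ := f.support)) q,
    ← Finset.sum_add_distrib]
  refine Finset.sum_le_sum fun x _ => ?_
  split
  · rw [Finsupp.add_apply]; exact norm_add_le _ _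
  · simp

lemma l21Norm_add_le {k : Type*} [NormedAddCommGroup k] (f g : G →₀ k) :
    l21Norm H (f + g) ≤ l21Norm H f + l21Norm H g := by
  rw [l21Norm_eq_l2, l21Norm_eq_l2, l21Norm_eq_l2]
  exact l2_triangle_of_le _ _ _ (Tq_nonneg H _) (Tq_nonneg H _) (Tq_nonneg H _)
    (Tq_add_le H f g)

lemma l21Norm_sum_le {k : Type*} [NormedAddCommGroup k] {ι : Type*} (s : Finset ι)
    (F : ι → G →₀ k) : l21Norm H (∑ i ∈ s, F i) ≤ ∑ i ∈ s, l21Norm H (F i) := by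
  classical
  induction s using Finset.cons_induction with
  | empty => simp [l21Norm_zero]
  | cons i s hi ih =>
      rw [Finset.sum_cons, Finset.sum_cons]
      exact (l21Norm_add_le H _ _).trans (by linarith)

end Lemmas2
section Lemmas3

open Finsupp

variable {G : Type*} [Group G] (H : Subgroup G)

lemma mapDomain_mulLeft_apply {k : Type*} [AddCommMonoid k] (z : G) (ϕ : G →₀ k) (x : G) :
    Finsupp.mapDomain (fun y => z * y) ϕ x = ϕ (z⁻¹ * x) := by
  have : (fun y => z * y) = ⇑(Equiv.mulLeft z) := rfl
  rw [this, Finsupp.mapDomain_equiv_apply]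
  rfl

lemma conv_apply' {k : Type*} [Semiring k] (f ϕ : G →₀ k) {s : Finset G}
    (hs : f.support ⊆ s) (x : G) : conv f ϕ x = ∑ z ∈ s, f z * ϕ (z⁻¹ * x) := by
  rw [conv, Finsupp.sum_apply]
  rw [Finsupp.sum]
  refine (Finset.sum_subset hs fun z _ hz => by
    rw [Finsupp.notMem_support_iff.mp hz]; simp).symm.trans ?_ |>.symm
  refine Finset.sum_congr rfl fun z _ => ?_
  rw [Finsupp.smul_apply, mapDomain_mulLeft_apply, smul_eq_mul]

lemma conv_zero_right {k : Type*} [Semiring k] (f : G →₀ k) : conv f 0 = 0 := by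
  ext x
  rw [conv_apply' f 0 (le_refl _) x]
  simp

lemma conv_add_left {k : Type*} [Semiring k] (f g ϕ : G →₀ k) :
    conv (f + g) ϕ = conv f ϕ + conv g ϕ := by
  ext x
  have h1 : (f + g).support ⊆ f.support ∪ g.support := Finsupp.support_add
  rw [Finsupp.add_apply, conv_apply' (f + g) ϕ h1 x,
    conv_apply' f ϕ (Finset.subset_union_left (s₂ := g.support)) x,
    conv_apply' g ϕ (Finset.subset_union_right (s₁ := f.support)) x,
    ← Finset.sum_add_distrib]
  exact Finset.sum_congr rfl fun z _ => by rw [Finsupp.add_apply, add_mul]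

lemma conv_smul_right {k : Type*} [CommSemiring k] (c : k) (f ϕ : G →₀ k) :
    conv f (c • ϕ) = c • conv f ϕ := by
  ext x
  rw [Finsupp.smul_apply, conv_apply' f (c • ϕ) (le_refl _) x,
    conv_apply' f ϕ (le_refl _) x, smul_eq_mul, Finset.mul_sum]
  refine Finset.sum_congr rfl fun z _ => ?_
  rw [Finsupp.smul_apply, smul_eq_mul]
  ring

lemma l2Norm_equivMapDomain {α β k : Type*} [NormedAddCommGroup k] (e : α ≃ β) (v : α →₀ k) :
    l2Norm (Finsupp.equivMapDomain e v) = l2Norm v := by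
  have hsub : (Finsupp.equivMapDomain e v).support ⊆ v.support.map e.toEmbedding := by
    intro b hb
    rw [Finsupp.mem_support_iff, Finsupp.equivMapDomain_apply] at hb
    simp only [Finset.mem_map, Equiv.coe_toEmbedding]
    exact ⟨e.symm b, Finsupp.mem_support_iff.mpr hb, e.apply_symm_apply b⟩
  rw [l2Norm_eq_sum _ hsub, Finset.sum_map, l2Norm]
  congr 1
  refine Finset.sum_congr rfl fun a _ => ?_
  rw [Equiv.coe_toEmbedding, Finsupp.equivMapDomain_apply, e.symm_apply_apply]

lemma l21Norm_translate (z : G) (ϕ : G →₀ ℂ) :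
    l21Norm H (Finsupp.mapDomain (fun y => z * y) ϕ) = l21Norm H ϕ := by
  rw [l21Norm_eq_l2, l21Norm_eq_l2]
  have step1 : (Finsupp.mapDomain (fun y => z * y) ϕ).mapRange norm norm_zero =
      Finsupp.mapDomain (fun y => z * y) (ϕ.mapRange norm norm_zero) := by
    ext x
    rw [Finsupp.mapRange_apply, mapDomain_mulLeft_apply, mapDomain_mulLeft_apply,
      Finsupp.mapRange_apply]
  have hfun : ((QuotientGroup.mk : G → G ⧸ H) ∘ fun y => z * y) =
      (fun q : G ⧸ H => z • q) ∘ (QuotientGroup.mk : G → G ⧸ H) := by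
    funext x
    simp only [Function.comp_apply]
    rw [← smul_eq_mul]
    exact (MulAction.Quotient.smul_mk H z x).symm
  have step2 : Tq H (Finsupp.mapDomain (fun y => z * y) ϕ) =
      Finsupp.mapDomain (fun q : G ⧸ H => z • q) (Tq H ϕ) := by
    rw [Tq, step1, Tq, ← Finsupp.mapDomain_comp, hfun, Finsupp.mapDomain_comp]
  have hperm : (fun q : G ⧸ H => z • q) = ⇑(MulAction.toPerm z : Equiv.Perm (G ⧸ H)) := rfl
  rw [step2, hperm, ← Finsupp.equivMapDomain_eq_mapDomain]
  exact l2Norm_equivMapDomain _ _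

lemma conv_eq_finset_sum {k : Type*} [Semiring k] (f ϕ : G →₀ k) :
    conv f ϕ = ∑ z ∈ f.support, f z • Finsupp.mapDomain (fun y => z * y) ϕ := rfl

lemma l1Norm_nonneg {α k : Type*} [NormedAddCommGroup k] (f : α →₀ k) : 0 ≤ l1Norm f :=
  Finset.sum_nonneg fun x _ => norm_nonneg _

lemma l21Norm_conv_le (f ϕ : G →₀ ℂ) :
    l21Norm H (conv f ϕ) ≤ l1Norm f * l21Norm H ϕ := by
  rw [conv_eq_finset_sum]
  refine (l21Norm_sum_le H f.support _).trans ?_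
  rw [l1Norm, Finset.sum_mul]
  refine Finset.sum_le_sum fun z _ => ?_
  rw [l21Norm_smul, l21Norm_translate]

/-- membership set for the hybrid operator norm -/
lemma hybridOpNorm_set_bddAbove (f : G →₀ ℂ) :
    BddAbove {c : ℝ | ∃ ϕ : G →₀ ℂ, l21Norm H ϕ ≤ 1 ∧ c = l21Norm H (conv f ϕ)} := by
  refine ⟨l1Norm f, fun c hc => ?_⟩
  obtain ⟨ϕ, hϕ, rfl⟩ := hc
  calc l21Norm H (conv f ϕ) ≤ l1Norm f * l21Norm H ϕ := l21Norm_conv_le H f ϕ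
  _ ≤ l1Norm f * 1 := by
      have := l1Norm_nonneg f
      nlinarith [l21Norm_nonneg H ϕ]
  _ = l1Norm f := mul_one _

lemma hybridOpNorm_nonneg (f : G →₀ ℂ) : 0 ≤ hybridOpNorm H f := by
  have h0 : (0:ℝ) ∈ {c : ℝ | ∃ ϕ : G →₀ ℂ, l21Norm H ϕ ≤ 1 ∧ c = l21Norm H (conv f ϕ)} :=
    ⟨0, by rw [l21Norm_zero]; norm_num, by rw [conv_zero_right, l21Norm_zero]⟩
  exact le_csSup (hybridOpNorm_set_bddAbove H f) h0

lemma hybridOpNorm_le (f : G →₀ ℂ) (a : ℝ) (ha : 0 ≤ a)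
    (h : ∀ ϕ : G →₀ ℂ, l21Norm H ϕ ≤ 1 → l21Norm H (conv f ϕ) ≤ a) :
    hybridOpNorm H f ≤ a := by
  exact Real.sSup_le (fun c hc => by obtain ⟨ϕ, h1, rfl⟩ := hc; exact h ϕ h1) ha

lemma l21Norm_conv_le_hybridOpNorm (f ϕ : G →₀ ℂ) :
    l21Norm H (conv f ϕ) ≤ hybridOpNorm H f * l21Norm H ϕ := by
  by_cases hϕ : ϕ = 0
  · subst hϕ
    rw [conv_zero_right, l21Norm_zero, mul_zero]
  · have ht : 0 < l21Norm H ϕ := l21Norm_pos H ϕ hϕ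
    set t := l21Norm H ϕ with htdef
    have hmem : t⁻¹ * l21Norm H (conv f ϕ) ∈
        {c : ℝ | ∃ ψ : G →₀ ℂ, l21Norm H ψ ≤ 1 ∧ c = l21Norm H (conv f ψ)} := by
      refine ⟨((t⁻¹ : ℝ) : ℂ) • ϕ, ?_, ?_⟩
      · rw [l21Norm_smul]
        simp only [Complex.norm_real]
        rw [Real.norm_of_nonneg (by positivity)]
        rw [inv_mul_cancel₀ ht.ne']
      · rw [conv_smul_right, l21Norm_smul]
        simp only [Complex.norm_real]
        rw [Real.norm_of_nonneg (by positivity)]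
    have hle : t⁻¹ * l21Norm H (conv f ϕ) ≤ hybridOpNorm H f :=
      le_csSup (hybridOpNorm_set_bddAbove H f) hmem
    calc l21Norm H (conv f ϕ) = t * (t⁻¹ * l21Norm H (conv f ϕ)) := by
          field_simp
    _ ≤ t * hybridOpNorm H f := by nlinarith
    _ = hybridOpNorm H f * t := mul_comm _ _

lemma hybridOpNorm_add_le (f g : G →₀ ℂ) :
    hybridOpNorm H (f + g) ≤ hybridOpNorm H f + hybridOpNorm H g := by
  refine hybridOpNorm_le H _ _
    (by have := hybridOpNorm_nonneg H f; have := hybridOpNorm_nonneg H g; linarith)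
    fun ϕ hϕ => ?_
  rw [conv_add_left]
  calc l21Norm H (conv f ϕ + conv g ϕ)
      ≤ l21Norm H (conv f ϕ) + l21Norm H (conv g ϕ) := l21Norm_add_le H _ _
  _ ≤ hybridOpNorm H f * l21Norm H ϕ + hybridOpNorm H g * l21Norm H ϕ :=
      add_le_add (l21Norm_conv_le_hybridOpNorm H f ϕ) (l21Norm_conv_le_hybridOpNorm H g ϕ)
  _ ≤ hybridOpNorm H f + hybridOpNorm H g := by
      have h1 := hybridOpNorm_nonneg H f
      have h2 := hybridOpNorm_nonneg H g
      have h3 := l21Norm_nonneg H ϕ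
      nlinarith

end Lemmas3
section Lemmas4

open Finsupp Pointwise

variable {G : Type*} [Group G] (H : Subgroup G)

lemma starFun_apply {k : Type*} [Zero k] (f : G →₀ k) (x : G) : starFun f x = f x⁻¹ := rfl

lemma starFun_starFun {k : Type*} [Zero k] (f : G →₀ k) : starFun (starFun f) = f := by
  ext x
  rw [starFun_apply, starFun_apply, inv_inv]

lemma Tq_eq_filter_sum (u : G →₀ ℝ) (hu : ∀ x, 0 ≤ u x) (q : G ⧸ H) :
    Tq H u q = ∑ y ∈ u.support.filter (fun y => (QuotientGroup.mk y : G ⧸ H) = q), u y := by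
  rw [Tq_apply' H u (le_refl _) q, Finset.sum_filter]
  exact Finset.sum_congr rfl fun y _ => by
    split <;> simp [Real.norm_of_nonneg (hu y)]

lemma support_Tq_subset {k : Type*} [NormedAddCommGroup k] (f : G →₀ k) :
    (Tq H f).support ⊆ f.support.image (QuotientGroup.mk : G → G ⧸ H) := by
  intro q hq
  rw [Finsupp.mem_support_iff, Tq_apply' H f (le_refl _) q] at hq
  obtain ⟨x, hx1, hx2⟩ := Finset.exists_ne_zero_of_sum_ne_zero hq
  have hmk : (QuotientGroup.mk x : G ⧸ H) = q := by
    by_contra hc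
    rw [if_neg hc] at hx2
    exact hx2 rfl
  exact Finset.mem_image.mpr ⟨x, hx1, hmk⟩

lemma key_sum (g u : G →₀ ℝ) (hg : ∀ x, 0 ≤ g x) (hu : ∀ x, 0 ≤ u x) :
    sumOverSubgroup H (conv (starFun g) u) =
      ∑ q ∈ g.support.image (QuotientGroup.mk : G → G ⧸ H), Tq H g q * Tq H u q := by
  classical
  set v := conv (starFun g) u with hv
  set Zs := (starFun g).support with hZs
  set B := Zs * u.support with hB
  set BH := B.filter (fun x => x ∈ H) with hBH
  -- supp v ⊆ B
  have hsupp : v.support ⊆ B := by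
    intro x hx
    rw [Finsupp.mem_support_iff, hv, conv_apply' (starFun g) u (le_refl _) x] at hx
    obtain ⟨z, hz1, hz2⟩ := Finset.exists_ne_zero_of_sum_ne_zero hx
    have hu' : z⁻¹ * x ∈ u.support := by
      rw [Finsupp.mem_support_iff]
      intro h0
      rw [h0, mul_zero] at hz2
      exact hz2 rfl
    have := Finset.mul_mem_mul hz1 hu'
    rwa [mul_inv_cancel_left] at this
  -- step B
  have stepB : sumOverSubgroup H v = ∑ x ∈ BH, v x := by
    rw [sumOverSubgroup]
    refine Finset.sum_subset (Finset.filter_subset_filter _ hsupp) fun x hx hx' => ?_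
    rw [Finset.mem_filter] at hx
    by_contra h0
    have : x ∈ v.support := Finsupp.mem_support_iff.mpr h0
    exact hx' (Finset.mem_filter.mpr ⟨this, hx.2⟩)
  -- step C
  have stepC : ∑ x ∈ BH, v x = ∑ z ∈ Zs, starFun g z * ∑ x ∈ BH, u (z⁻¹ * x) := by
    rw [hv]
    calc ∑ x ∈ BH, conv (starFun g) u x
        = ∑ x ∈ BH, ∑ z ∈ Zs, starFun g z * u (z⁻¹ * x) :=
          Finset.sum_congr rfl fun x _ => conv_apply' (starFun g) u (le_refl _) x
    _ = ∑ z ∈ Zs, ∑ x ∈ BH, starFun g z * u (z⁻¹ * x) := Finset.sum_comm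
    _ = _ := Finset.sum_congr rfl fun z _ => by rw [Finset.mul_sum]
  -- step D
  have stepD : ∀ z ∈ Zs, ∑ x ∈ BH, u (z⁻¹ * x) = Tq H u (QuotientGroup.mk z⁻¹) := by
    intro z hz
    have hinj : ∀ x ∈ BH, ∀ y ∈ BH, z⁻¹ * x = z⁻¹ * y → x = y := fun x _ y _ h =>
      mul_left_cancel h
    rw [← Finset.sum_image hinj]
    rw [Tq_eq_filter_sum H u hu]
    refine (Finset.sum_subset ?_ ?_).symm
    · -- filter ⊆ image
      intro y hy
      rw [Finset.mem_filter] at hy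
      obtain ⟨hy1, hy2⟩ := hy
      have hxH : z * y ∈ H := by
        rw [QuotientGroup.eq] at hy2
        have : (z * y)⁻¹ ∈ H := by
          rw [mul_inv_rev]
          simpa using hy2
        exact (inv_mem_iff (H := H)).mp this
      have hxB : z * y ∈ B := Finset.mul_mem_mul hz hy1
      refine Finset.mem_image.mpr ⟨z * y, Finset.mem_filter.mpr ⟨hxB, hxH⟩, ?_⟩
      rw [inv_mul_cancel_left]
    · -- vanishing
      intro y hy hy'
      obtain ⟨x, hx, rfl⟩ := Finset.mem_image.mp hy
      rw [Finset.mem_filter] at hx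
      have hmk : (QuotientGroup.mk (z⁻¹ * x) : G ⧸ H) = QuotientGroup.mk z⁻¹ := by
        rw [QuotientGroup.eq]
        simpa using (inv_mem_iff (H := H)).mpr hx.2
      by_contra h0
      exact h0 <| Finsupp.notMem_support_iff.mp fun hmem =>
        hy' (Finset.mem_filter.mpr ⟨hmem, hmk⟩)
  -- step E : reindex z ↦ z⁻¹
  have stepE : ∑ z ∈ Zs, starFun g z * Tq H u (QuotientGroup.mk z⁻¹) =
      ∑ w ∈ g.support, g w * Tq H u (QuotientGroup.mk w) := by
    refine Finset.sum_nbij' (fun z => z⁻¹) (fun w => w⁻¹) ?_ ?_ ?_ ?_ ?_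
    · intro z hz
      rw [hZs, Finsupp.mem_support_iff, starFun_apply] at hz
      exact Finsupp.mem_support_iff.mpr hz
    · intro w hw
      rw [hZs, Finsupp.mem_support_iff, starFun_apply, inv_inv]
      exact Finsupp.mem_support_iff.mp hw
    · intro z _; exact inv_inv z
    · intro w _; exact inv_inv w
    · intro z _
      rw [starFun_apply]
  -- step F : fiberwise
  have stepF : ∑ w ∈ g.support, g w * Tq H u (QuotientGroup.mk w) =
      ∑ q ∈ g.support.image (QuotientGroup.mk : G → G ⧸ H), Tq H g q * Tq H u q := by
    rw [← Finset.sum_fiberwise_of_maps_to (g := fun w => (QuotientGroup.mk w : G ⧸ H))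
      (fun w hw => Finset.mem_image_of_mem _ hw) (fun w => g w * Tq H u (QuotientGroup.mk w))]
    refine Finset.sum_congr rfl fun q hq => ?_
    rw [Tq_eq_filter_sum H g hg, Finset.sum_mul]
    refine Finset.sum_congr rfl fun w hw => ?_
    rw [Finset.mem_filter] at hw
    rw [hw.2]
  have stepCD : ∑ z ∈ Zs, starFun g z * ∑ x ∈ BH, u (z⁻¹ * x) =
      ∑ z ∈ Zs, starFun g z * Tq H u (QuotientGroup.mk z⁻¹) :=
    Finset.sum_congr rfl fun z hz => by rw [stepD z hz]
  rw [stepB, stepC, stepCD, stepE, stepF]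

lemma pairing_le (g u : G →₀ ℝ) (hg : ∀ x, 0 ≤ g x) (hu : ∀ x, 0 ≤ u x) :
    ∑ q ∈ g.support.image (QuotientGroup.mk : G → G ⧸ H), Tq H g q * Tq H u q ≤
      l21Norm H g * l21Norm H u := by
  set I := g.support.image (QuotientGroup.mk : G → G ⧸ H) with hI
  have h1 : ∑ q ∈ I, Tq H g q * Tq H u q ≤
      Real.sqrt (∑ q ∈ I, (Tq H g q) ^ 2) * Real.sqrt (∑ q ∈ I, (Tq H u q) ^ 2) :=
    Real.sum_mul_le_sqrt_mul_sqrt I _ _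
  have h2 : Real.sqrt (∑ q ∈ I, (Tq H g q) ^ 2) = l21Norm H g := by
    rw [l21Norm_eq_l2, l2Norm_eq_sum (Tq H g) (support_Tq_subset H g)]
    congr 1
    exact Finset.sum_congr rfl fun q _ => by
      rw [Real.norm_of_nonneg (Tq_nonneg H g q)]
  have h3 : Real.sqrt (∑ q ∈ I, (Tq H u q) ^ 2) ≤ l21Norm H u := by
    rw [l21Norm_eq_l2, l2Norm_eq_sum (Tq H u) (Finset.subset_union_right (s₁ := I))]
    refine Real.sqrt_le_sqrt ?_
    have step : ∑ q ∈ I, (Tq H u q) ^ 2 ≤ ∑ q ∈ I ∪ (Tq H u).support, (Tq H u q) ^ 2 :=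
      Finset.sum_le_sum_of_subset_of_nonneg Finset.subset_union_left
        (fun q _ _ => by positivity)
    refine step.trans_eq (Finset.sum_congr rfl fun q _ => ?_)
    rw [Real.norm_of_nonneg (Tq_nonneg H u q)]
  calc ∑ q ∈ I, Tq H g q * Tq H u q ≤ _ := h1
  _ ≤ l21Norm H g * l21Norm H u := by
      rw [h2]
      have := l21Norm_nonneg H g
      nlinarith [Real.sqrt_nonneg (∑ q ∈ I, (Tq H u q) ^ 2)]

end Lemmas4
section Lemmas5

open Finsupp

variable {G : Type*} [Group G] (H : Subgroup G)

/-- absolute value of a complex finsupp -/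
noncomputable def absF (f : G →₀ ℂ) : G →₀ ℝ := f.mapRange norm norm_zero

lemma absF_apply (f : G →₀ ℂ) (x : G) : absF f x = ‖f x‖ := Finsupp.mapRange_apply

lemma absF_nonneg (f : G →₀ ℂ) (x : G) : 0 ≤ absF f x := by
  rw [absF_apply]; exact norm_nonneg _

lemma absF_support (f : G →₀ ℂ) : (absF f).support ⊆ f.support := Finsupp.support_mapRange

lemma Tq_absF (f : G →₀ ℂ) : Tq H (absF f) = Tq H f := by
  ext q
  rw [Tq_apply' H (absF f) (absF_support f) q, Tq_apply' H f (le_refl _) q]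
  refine Finset.sum_congr rfl fun x _ => ?_
  rw [absF_apply, norm_norm]

lemma l21Norm_absF (f : G →₀ ℂ) : l21Norm H (absF f) = l21Norm H f := by
  rw [l21Norm_eq_l2, l21Norm_eq_l2, Tq_absF]

lemma toC_apply {α : Type*} (f : α →₀ ℝ) (x : α) : toC f x = (f x : ℂ) :=
  Finsupp.mapRange_apply

lemma toC_support {α : Type*} (f : α →₀ ℝ) : (toC f).support ⊆ f.support :=
  Finsupp.support_mapRange

lemma Tq_toC (f : G →₀ ℝ) : Tq H (toC f) = Tq H f := by
  ext q
  rw [Tq_apply' H (toC f) (toC_support f) q, Tq_apply' H f (le_refl _) q]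
  refine Finset.sum_congr rfl fun x _ => ?_
  rw [toC_apply, Complex.norm_real]

lemma l21Norm_toC (f : G →₀ ℝ) : l21Norm H (toC f) = l21Norm H f := by
  rw [l21Norm_eq_l2, l21Norm_eq_l2, Tq_toC]

lemma conv_toC (f ϕ : G →₀ ℝ) : conv (toC f) (toC ϕ) = toC (conv f ϕ) := by
  ext x
  rw [toC_apply, conv_apply' (toC f) (toC ϕ) (toC_support f) x,
    conv_apply' f ϕ (le_refl _) x]
  push_cast
  refine Finset.sum_congr rfl fun z _ => ?_
  rw [toC_apply, toC_apply]

lemma conv_nonneg_of_nonneg (f ϕ : G →₀ ℝ) (hf : ∀ x, 0 ≤ f x) (hϕ : ∀ x, 0 ≤ ϕ x) (x : G) :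
    0 ≤ conv f ϕ x := by
  rw [conv_apply' f ϕ (le_refl _) x]
  exact Finset.sum_nonneg fun z _ => mul_nonneg (hf z) (hϕ _)

lemma conv_abs_le (f ϕ : G →₀ ℂ) (x : G) :
    ‖conv f ϕ x‖ ≤ ‖conv (absF f) (absF ϕ) x‖ := by
  have h1 : conv (absF f) (absF ϕ) x = ∑ z ∈ f.support, ‖f z‖ * ‖ϕ (z⁻¹ * x)‖ := by
    rw [conv_apply' (absF f) (absF ϕ) (absF_support f) x]
    exact Finset.sum_congr rfl fun z _ => by rw [absF_apply, absF_apply]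
  have h2 : ‖conv f ϕ x‖ ≤ ∑ z ∈ f.support, ‖f z‖ * ‖ϕ (z⁻¹ * x)‖ := by
    rw [conv_apply' f ϕ (le_refl _) x]
    exact (norm_sum_le _ _).trans (Finset.sum_le_sum fun z _ => by rw [norm_mul])
  rw [Real.norm_of_nonneg (conv_nonneg_of_nonneg _ _ (absF_nonneg f) (absF_nonneg ϕ) x), h1]
  exact h2

lemma starFun_nonneg (ψ : G →₀ ℝ) (hψ : ∀ x, 0 ≤ ψ x) (x : G) : 0 ≤ starFun ψ x := by
  rw [starFun_apply]; exact hψ _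

lemma conv_zero_left {k : Type*} [Semiring k] (ϕ : G →₀ k) : conv 0 ϕ = 0 :=
  Finsupp.sum_zero_index

lemma hybridOpNorm_zero : hybridOpNorm H (0 : G →₀ ℂ) = 0 :=
  le_antisymm
    (hybridOpNorm_le H 0 0 le_rfl fun ϕ _ => by rw [conv_zero_left, l21Norm_zero])
    (hybridOpNorm_nonneg H 0)

lemma hybridOpNorm_sum_le {ι : Type*} (s : Finset ι) (F : ι → G →₀ ℂ) :
    hybridOpNorm H (∑ i ∈ s, F i) ≤ ∑ i ∈ s, hybridOpNorm H (F i) := by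
  classical
  induction s using Finset.cons_induction with
  | empty => simp [hybridOpNorm_zero]
  | cons i s hi ih =>
      rw [Finset.sum_cons, Finset.sum_cons]
      exact (hybridOpNorm_add_le H _ _).trans (by linarith)

lemma weightS_apply (S : Set G) (s : ℝ) (f : G →₀ ℂ) (x : G) :
    weight S s f x = ((((1 : ℝ) + (wordLength S x : ℝ)) ^ s : ℝ) : ℂ) * f x := rfl

lemma weightS_support (S : Set G) (s : ℝ) (f : G →₀ ℂ) : (weight S s f).support = f.support :=
  rfl

lemma norm_weight_apply (S : Set G) (s : ℝ) (f : G →₀ ℂ) (x : G) :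
    ‖weight S s f x‖ = ((1 : ℝ) + (wordLength S x : ℝ)) ^ s * ‖f x‖ := by
  rw [weightS_apply, norm_mul, Complex.norm_real,
    Real.norm_of_nonneg (Real.rpow_nonneg (by positivity) s)]

lemma basel_aux : ∀ m : ℕ, ∑ n ∈ Finset.range (m + 1), (1 / ((n : ℝ) + 1)) ^ 2 ≤
    2 - 1 / ((m : ℝ) + 1) := by
  intro m
  induction m with
  | zero => norm_num
  | succ m ih =>
      rw [Finset.sum_range_succ]
      have hm1 : (0:ℝ) < (m : ℝ) + 1 := by positivity
      have hm2 : (0:ℝ) < (m : ℝ) + 2 := by positivity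
      have key : (1 / ((m : ℝ) + 1 + 1)) ^ 2 ≤ 1 / ((m:ℝ)+1) - 1 / ((m:ℝ)+2) := by
        have heq : 1 / ((m:ℝ)+1) - 1 / ((m:ℝ)+2) = 1 / (((m:ℝ)+1) * ((m:ℝ)+2)) := by
          field_simp
          ring
        rw [heq, div_pow, one_pow]
        apply one_div_le_one_div_of_le (by positivity)
        nlinarith
      have hcast : ((m + 1 : ℕ) : ℝ) = (m : ℝ) + 1 := by push_cast; ring
      have h22 : ((m:ℝ) + 1 + 1) = (m:ℝ) + 2 := by ring
      rw [hcast, h22]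
      rw [h22] at key
      linarith

lemma basel (m : ℕ) : ∑ n ∈ Finset.range m, (1 / ((n : ℝ) + 1)) ^ 2 ≤ 2 := by
  cases m with
  | zero => norm_num
  | succ m =>
      have := basel_aux m
      have h2 : (0:ℝ) < 1 / ((m:ℝ)+1) := by positivity
      linarith

end Lemmas5
section Impls

variable {G : Type*} [Group G] (H : Subgroup G) (S : Set G)

lemma impl_2_3
    (h : ∃ C : ℝ, ∃ D : ℕ, 0 ≤ C ∧ ∀ (R : ℕ) (f ϕ : G →₀ ℂ), supportedInBall S R f →
      l21Norm H (conv f ϕ) ≤ C * ((R : ℝ) + 1) ^ D * l21Norm H f * l21Norm H ϕ) :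
    ∃ C : ℝ, ∃ D : ℕ, 0 ≤ C ∧ ∀ (R : ℕ) (f : G →₀ ℂ), supportedInBall S R f →
      hybridOpNorm H f ≤ C * ((R : ℝ) + 1) ^ D * l21Norm H f := by
  obtain ⟨C, D, hC, h2⟩ := h
  refine ⟨C, D, hC, fun R f hf => ?_⟩
  refine hybridOpNorm_le H f _ ?_ fun ϕ hϕ => ?_
  · have := l21Norm_nonneg H f
    positivity
  · have h1 := h2 R f ϕ hf
    have h3 : (0:ℝ) ≤ C * ((R : ℝ) + 1) ^ D * l21Norm H f := by
      have := l21Norm_nonneg H f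
      positivity
    nlinarith [l21Norm_nonneg H (conv f ϕ)]

lemma impl_3_2
    (h : ∃ C : ℝ, ∃ D : ℕ, 0 ≤ C ∧ ∀ (R : ℕ) (f : G →₀ ℂ), supportedInBall S R f →
      hybridOpNorm H f ≤ C * ((R : ℝ) + 1) ^ D * l21Norm H f) :
    ∃ C : ℝ, ∃ D : ℕ, 0 ≤ C ∧ ∀ (R : ℕ) (f ϕ : G →₀ ℂ), supportedInBall S R f →
      l21Norm H (conv f ϕ) ≤ C * ((R : ℝ) + 1) ^ D * l21Norm H f * l21Norm H ϕ := by
  obtain ⟨C, D, hC, h3⟩ := h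
  refine ⟨C, D, hC, fun R f ϕ hf => ?_⟩
  calc l21Norm H (conv f ϕ) ≤ hybridOpNorm H f * l21Norm H ϕ :=
        l21Norm_conv_le_hybridOpNorm H f ϕ
  _ ≤ C * ((R : ℝ) + 1) ^ D * l21Norm H f * l21Norm H ϕ :=
        mul_le_mul_of_nonneg_right (h3 R f hf) (l21Norm_nonneg H ϕ)

lemma impl_1_3
    (h : ∃ K s : ℝ, 0 ≤ K ∧ 0 ≤ s ∧ ∀ f : G →₀ ℂ,
      hybridOpNorm H f ≤ K * l21Norm H (weight S s f)) :
    ∃ C : ℝ, ∃ D : ℕ, 0 ≤ C ∧ ∀ (R : ℕ) (f : G →₀ ℂ), supportedInBall S R f →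
      hybridOpNorm H f ≤ C * ((R : ℝ) + 1) ^ D * l21Norm H f := by
  obtain ⟨K, s, hK, hs, h1⟩ := h
  refine ⟨K, ⌈s⌉₊, hK, fun R f hf => ?_⟩
  have hw : l21Norm H (weight S s f) ≤ ((R : ℝ) + 1) ^ (⌈s⌉₊ : ℕ) * l21Norm H f := by
    have hbase : (1:ℝ) ≤ (R : ℝ) + 1 := by
      have : (0:ℝ) ≤ (R:ℝ) := Nat.cast_nonneg R
      linarith
    set c : ℂ := ((((R : ℝ) + 1) ^ (⌈s⌉₊ : ℕ) : ℝ) : ℂ) with hc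
    have hmono : ∀ x, ‖weight S s f x‖ ≤ ‖(c • f) x‖ := by
      intro x
      rw [norm_weight_apply, Finsupp.smul_apply, norm_smul, hc, Complex.norm_real,
        Real.norm_of_nonneg (by positivity)]
      by_cases hfx : f x = 0
      · rw [hfx]; simp
      · have hx : x ∈ f.support := Finsupp.mem_support_iff.mpr hfx
        have hlen : (wordLength S x : ℝ) ≤ (R : ℝ) := Nat.cast_le.mpr (hf x hx)
        have step1 : ((1:ℝ) + (wordLength S x : ℝ)) ^ s ≤ ((R:ℝ) + 1) ^ s :=
          Real.rpow_le_rpow (by positivity) (by linarith) hs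
        have step2 : ((R:ℝ) + 1) ^ s ≤ ((R:ℝ) + 1) ^ ((⌈s⌉₊ : ℕ) : ℝ) :=
          Real.rpow_le_rpow_of_exponent_le hbase (Nat.le_ceil s)
        have step3 : ((R:ℝ) + 1) ^ ((⌈s⌉₊ : ℕ) : ℝ) = ((R:ℝ) + 1) ^ (⌈s⌉₊ : ℕ) :=
          Real.rpow_natCast _ _
        have hnf : (0:ℝ) ≤ ‖f x‖ := norm_nonneg _
        nlinarith [step1, step2.trans_eq step3]
    calc l21Norm H (weight S s f) ≤ l21Norm H (c • f) := l21Norm_mono H _ _ hmono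
    _ = ‖c‖ * l21Norm H f := l21Norm_smul H c f
    _ = ((R : ℝ) + 1) ^ (⌈s⌉₊ : ℕ) * l21Norm H f := by
        rw [hc, Complex.norm_real, Real.norm_of_nonneg (by positivity)]
  calc hybridOpNorm H f ≤ K * l21Norm H (weight S s f) := h1 f
  _ ≤ K * (((R : ℝ) + 1) ^ (⌈s⌉₊ : ℕ) * l21Norm H f) := mul_le_mul_of_nonneg_left hw hK
  _ = K * ((R : ℝ) + 1) ^ (⌈s⌉₊ : ℕ) * l21Norm H f := by ring

lemma impl_2_4
    (h : ∃ C : ℝ, ∃ D : ℕ, 0 ≤ C ∧ ∀ (R : ℕ) (f ϕ : G →₀ ℂ), supportedInBall S R f →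
      l21Norm H (conv f ϕ) ≤ C * ((R : ℝ) + 1) ^ D * l21Norm H f * l21Norm H ϕ) :
    ∃ C : ℝ, ∃ D : ℕ, 0 ≤ C ∧ ∀ (R : ℕ) (f ϕ ψ : G →₀ ℝ),
      (∀ x, 0 ≤ f x) → (∀ x, 0 ≤ ϕ x) → (∀ x, 0 ≤ ψ x) → supportedInBall S R f →
      sumOverSubgroup H (conv (starFun (conv f ϕ)) (starFun ψ)) ≤
        C * ((R : ℝ) + 1) ^ D * l21Norm H f * l21Norm H ϕ * l21Norm H (starFun ψ) := by
  obtain ⟨C, D, hC, h2⟩ := h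
  refine ⟨C, D, hC, fun R f ϕ ψ hf hϕ hψ hball => ?_⟩
  set g := conv f ϕ with hg
  have hgnn : ∀ x, 0 ≤ g x := conv_nonneg_of_nonneg f ϕ hf hϕ
  set u := starFun ψ with hu
  have hunn : ∀ x, 0 ≤ u x := starFun_nonneg ψ hψ
  have hkey := key_sum H g u hgnn hunn
  have hpair := pairing_le H g u hgnn hunn
  have hg21 : l21Norm H g ≤ C * ((R : ℝ) + 1) ^ D * l21Norm H f * l21Norm H ϕ := by
    have hballC : supportedInBall S R (toC f) := fun x hx => hball x (toC_support f hx)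
    have := h2 R (toC f) (toC ϕ) hballC
    rw [conv_toC, l21Norm_toC, l21Norm_toC, l21Norm_toC] at this
    exact this
  have hle : sumOverSubgroup H (conv (starFun g) u) ≤ l21Norm H g * l21Norm H u := by
    rw [hkey]; exact hpair
  calc sumOverSubgroup H (conv (starFun g) u) ≤ l21Norm H g * l21Norm H u := hle
  _ ≤ (C * ((R : ℝ) + 1) ^ D * l21Norm H f * l21Norm H ϕ) * l21Norm H u :=
      mul_le_mul_of_nonneg_right hg21 (l21Norm_nonneg H u)
  _ = C * ((R : ℝ) + 1) ^ D * l21Norm H f * l21Norm H ϕ * l21Norm H (starFun ψ) := by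
      rw [hu]

lemma impl_4_2
    (h : ∃ C : ℝ, ∃ D : ℕ, 0 ≤ C ∧ ∀ (R : ℕ) (f ϕ ψ : G →₀ ℝ),
      (∀ x, 0 ≤ f x) → (∀ x, 0 ≤ ϕ x) → (∀ x, 0 ≤ ψ x) → supportedInBall S R f →
      sumOverSubgroup H (conv (starFun (conv f ϕ)) (starFun ψ)) ≤
        C * ((R : ℝ) + 1) ^ D * l21Norm H f * l21Norm H ϕ * l21Norm H (starFun ψ)) :
    ∃ C : ℝ, ∃ D : ℕ, 0 ≤ C ∧ ∀ (R : ℕ) (f ϕ : G →₀ ℂ), supportedInBall S R f →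
      l21Norm H (conv f ϕ) ≤ C * ((R : ℝ) + 1) ^ D * l21Norm H f * l21Norm H ϕ := by
  obtain ⟨C, D, hC, h4⟩ := h
  refine ⟨C, D, hC, fun R f ϕ hf => ?_⟩
  set F := absF f with hF
  set Φ := absF ϕ with hΦ
  set g := conv F Φ with hg
  have hgnn : ∀ x, 0 ≤ g x := conv_nonneg_of_nonneg F Φ (absF_nonneg f) (absF_nonneg ϕ)
  have hballF : supportedInBall S R F := fun x hx => hf x (absF_support f hx)
  have hmain := h4 R F Φ (starFun g) (absF_nonneg f) (absF_nonneg ϕ)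
    (starFun_nonneg g hgnn) hballF
  rw [starFun_starFun] at hmain
  rw [key_sum H g g hgnn hgnn] at hmain
  have hsq : ∑ q ∈ g.support.image (QuotientGroup.mk : G → G ⧸ H), Tq H g q * Tq H g q =
      l21Norm H g ^ 2 := by
    rw [l21Norm_eq_l2, l2Norm_eq_sum (Tq H g) (support_Tq_subset H g),
      Real.sq_sqrt (Finset.sum_nonneg fun q _ => by positivity)]
    exact Finset.sum_congr rfl fun q _ => by
      rw [Real.norm_of_nonneg (Tq_nonneg H g q), sq]
  rw [hsq, l21Norm_absF, l21Norm_absF] at hmain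
  -- hmain : l21 g ^ 2 ≤ C * (R+1)^D * l21 f * l21 ϕ * l21 g
  have hconvle : l21Norm H (conv f ϕ) ≤ l21Norm H g := by
    refine l21Norm_mono H _ _ fun x => ?_
    exact conv_abs_le f ϕ x
  by_cases hzero : l21Norm H g = 0
  · rw [hzero] at hconvle
    have : (0:ℝ) ≤ C * ((R : ℝ) + 1) ^ D * l21Norm H f * l21Norm H ϕ := by
      have := l21Norm_nonneg H f
      have := l21Norm_nonneg H ϕ
      positivity
    linarith
  · have hpos : 0 < l21Norm H g := (l21Norm_nonneg H g).lt_of_ne (Ne.symm hzero)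
    have hgle : l21Norm H g ≤ C * ((R : ℝ) + 1) ^ D * l21Norm H f * l21Norm H ϕ := by
      have := hmain
      rw [sq] at this
      exact le_of_mul_le_mul_right (by linarith [this]) hpos
    linarith
end Impls
section Impl31

variable {G : Type*} [Group G] (H : Subgroup G) (S : Set G)

lemma impl_3_1
    (h : ∃ C : ℝ, ∃ D : ℕ, 0 ≤ C ∧ ∀ (R : ℕ) (f : G →₀ ℂ), supportedInBall S R f →
      hybridOpNorm H f ≤ C * ((R : ℝ) + 1) ^ D * l21Norm H f) :
    ∃ K s : ℝ, 0 ≤ K ∧ 0 ≤ s ∧ ∀ f : G →₀ ℂ,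
      hybridOpNorm H f ≤ K * l21Norm H (weight S s f) := by
  classical
  obtain ⟨C, D, hC, h3⟩ := h
  have hsqrt2 : (0:ℝ) ≤ Real.sqrt 2 := Real.sqrt_nonneg 2
  refine ⟨C * Real.sqrt 2, (D : ℝ) + 1, by positivity, by positivity, fun f => ?_⟩
  set s' : ℝ := (D : ℝ) + 1 with hs'
  set N := f.support.sup (wordLength S) with hN
  set m := N + 1 with hm
  set F : ℕ → (G →₀ ℂ) := fun n => f.filter (fun x => wordLength S x = n) with hFdef
  have hFapp : ∀ n x, F n x = if wordLength S x = n then f x else 0 := fun n x => by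
    rw [hFdef]; simp [Finsupp.filter_apply]
  have hFsupp_sub : ∀ n, (F n).support ⊆ f.support := by
    intro n x hx
    rw [Finsupp.mem_support_iff, hFapp] at hx
    rw [Finsupp.mem_support_iff]
    intro h0
    rw [h0] at hx
    simp at hx
  have hFlen : ∀ n x, x ∈ (F n).support → wordLength S x = n := by
    intro n x hx
    rw [Finsupp.mem_support_iff, hFapp] at hx
    by_contra hc
    rw [if_neg hc] at hx
    exact hx rfl
  have hFsupp : ∀ n, supportedInBall S n (F n) := fun n x hx => (hFlen n x hx).le
  have hdecomp : f = ∑ n ∈ Finset.range m, F n := by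
    ext x
    rw [Finsupp.finset_sum_apply]
    simp_rw [hFapp]
    rw [Finset.sum_ite_eq (Finset.range m) (wordLength S x) (fun _ => f x)]
    by_cases hfx : f x = 0
    · rw [hfx]; simp
    · have hx : x ∈ f.support := Finsupp.mem_support_iff.mpr hfx
      have hmem : wordLength S x ∈ Finset.range m :=
        Finset.mem_range.mpr (Nat.lt_succ_of_le (Finset.le_sup hx))
      rw [if_pos hmem]
  set a : ℕ → ℝ := fun n => l21Norm H (F n) with ha
  have hann : ∀ n, 0 ≤ a n := fun n => l21Norm_nonneg H _
  have step1 : hybridOpNorm H f ≤ ∑ n ∈ Finset.range m, hybridOpNorm H (F n) := by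
    calc hybridOpNorm H f = hybridOpNorm H (∑ n ∈ Finset.range m, F n) := by rw [← hdecomp]
    _ ≤ _ := hybridOpNorm_sum_le H _ _
  have step2 : ∀ n, hybridOpNorm H (F n) ≤ C * ((n : ℝ) + 1) ^ D * a n := fun n =>
    h3 n (F n) (hFsupp n)
  -- Cauchy–Schwarz
  have stepCS : ∑ n ∈ Finset.range m, ((n : ℝ) + 1) ^ D * a n ≤
      Real.sqrt 2 * Real.sqrt (∑ n ∈ Finset.range m, (((n : ℝ) + 1) ^ (D + 1) * a n) ^ 2) := by
    have hsplit : ∀ n ∈ Finset.range m, ((n : ℝ) + 1) ^ D * a n =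
        (1 / ((n : ℝ) + 1)) * (((n : ℝ) + 1) ^ (D + 1) * a n) := by
      intro n _
      have hne : ((n : ℝ) + 1) ≠ 0 := by positivity
      rw [pow_succ]
      field_simp
    rw [Finset.sum_congr rfl hsplit]
    calc ∑ n ∈ Finset.range m, (1 / ((n : ℝ) + 1)) * (((n : ℝ) + 1) ^ (D + 1) * a n)
        ≤ Real.sqrt (∑ n ∈ Finset.range m, (1 / ((n : ℝ) + 1)) ^ 2) *
          Real.sqrt (∑ n ∈ Finset.range m, (((n : ℝ) + 1) ^ (D + 1) * a n) ^ 2) :=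
          Real.sum_mul_le_sqrt_mul_sqrt _ _ _
    _ ≤ Real.sqrt 2 *
          Real.sqrt (∑ n ∈ Finset.range m, (((n : ℝ) + 1) ^ (D + 1) * a n) ^ 2) := by
          refine mul_le_mul_of_nonneg_right ?_ (Real.sqrt_nonneg _)
          exact Real.sqrt_le_sqrt (basel m)
  -- the weighted bound
  set W := Tq H (weight S s' f) with hW
  set Q := f.support.image (QuotientGroup.mk : G → G ⧸ H) with hQ
  have hwsupp : (weight S s' f).support ⊆ f.support := (weightS_support S s' f).le
  have hsuppW : W.support ⊆ Q := by
    refine (support_Tq_subset H _).trans ?_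
    rw [hQ]
    exact Finset.image_subset_image hwsupp
  have hsuppA : ∀ n, (Tq H (F n)).support ⊆ Q := fun n =>
    (support_Tq_subset H _).trans (Finset.image_subset_image (hFsupp_sub n))
  have hrpow : ∀ k : ℕ, ((1 : ℝ) + (k : ℝ)) ^ s' = ((k : ℝ) + 1) ^ (D + 1) := by
    intro k
    rw [add_comm (1:ℝ) (k:ℝ), hs', show ((D:ℝ) + 1) = ((D + 1 : ℕ) : ℝ) by push_cast; ring]
    exact Real.rpow_natCast _ _
  have hWq : ∀ q, ∑ n ∈ Finset.range m, ((n : ℝ) + 1) ^ (D + 1) * Tq H (F n) q = W q := by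
    intro q
    have hA : ∀ n, Tq H (F n) q =
        ∑ x ∈ f.support, if (QuotientGroup.mk x : G ⧸ H) = q then ‖F n x‖ else 0 := fun n =>
      Tq_apply' H (F n) (hFsupp_sub n) q
    have hWq' : W q = ∑ x ∈ f.support,
        if (QuotientGroup.mk x : G ⧸ H) = q then ‖weight S s' f x‖ else 0 :=
      Tq_apply' H _ hwsupp q
    rw [hWq']
    simp_rw [hA, Finset.mul_sum]
    rw [Finset.sum_comm]
    refine Finset.sum_congr rfl fun x hx => ?_
    by_cases hq : (QuotientGroup.mk x : G ⧸ H) = q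
    · simp only [if_pos hq]
      have hterm : ∀ n ∈ Finset.range m, ((n : ℝ) + 1) ^ (D + 1) * ‖F n x‖ =
          if wordLength S x = n then ((wordLength S x : ℝ) + 1) ^ (D + 1) * ‖f x‖ else 0 := by
        intro n _
        rw [hFapp]
        split_ifs with hcond
        · rw [hcond]
        · simp
      rw [Finset.sum_congr rfl hterm,
        Finset.sum_ite_eq (Finset.range m) (wordLength S x)
          (fun _ => ((wordLength S x : ℝ) + 1) ^ (D + 1) * ‖f x‖)]
      have hmem : wordLength S x ∈ Finset.range m :=
        Finset.mem_range.mpr (Nat.lt_succ_of_le (Finset.le_sup hx))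
      rw [if_pos hmem, norm_weight_apply, hrpow (wordLength S x)]
    · simp only [if_neg hq]
      exact Finset.sum_eq_zero fun n _ => mul_zero _
  have hsq : ∀ q, ∑ n ∈ Finset.range m, (((n : ℝ) + 1) ^ (D + 1) * Tq H (F n) q) ^ 2 ≤
      W q ^ 2 := by
    intro q
    rw [← hWq q]
    exact Finset.sum_sq_le_sq_sum_of_nonneg fun n _ =>
      mul_nonneg (by positivity) (Tq_nonneg H (F n) q)
  have hAnorm : ∀ n, a n ^ 2 = ∑ q ∈ Q, (Tq H (F n) q) ^ 2 := by
    intro n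
    rw [ha]
    simp only
    rw [l21Norm_eq_l2, l2Norm_eq_sum (Tq H (F n)) (hsuppA n),
      Real.sq_sqrt (Finset.sum_nonneg fun q _ => by positivity)]
    exact Finset.sum_congr rfl fun q _ => by rw [Real.norm_of_nonneg (Tq_nonneg H _ q)]
  have step4 : ∑ n ∈ Finset.range m, (((n : ℝ) + 1) ^ (D + 1) * a n) ^ 2 ≤
      l21Norm H (weight S s' f) ^ 2 := by
    have hterm : ∀ n ∈ Finset.range m, (((n : ℝ) + 1) ^ (D + 1) * a n) ^ 2 =
        ∑ q ∈ Q, (((n : ℝ) + 1) ^ (D + 1) * Tq H (F n) q) ^ 2 := by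
      intro n _
      rw [mul_pow, hAnorm n, Finset.mul_sum]
      exact Finset.sum_congr rfl fun q _ => by rw [mul_pow]
    rw [Finset.sum_congr rfl hterm, Finset.sum_comm]
    have hl21sq : l21Norm H (weight S s' f) ^ 2 = ∑ q ∈ Q, W q ^ 2 := by
      rw [l21Norm_eq_l2, l2Norm_eq_sum W hsuppW,
        Real.sq_sqrt (Finset.sum_nonneg fun q _ => by positivity)]
      exact Finset.sum_congr rfl fun q _ => by
        rw [Real.norm_of_nonneg (Tq_nonneg H _ q)]
    rw [hl21sq]
    exact Finset.sum_le_sum fun q _ => hsq q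
  -- assemble
  calc hybridOpNorm H f ≤ ∑ n ∈ Finset.range m, hybridOpNorm H (F n) := step1
  _ ≤ ∑ n ∈ Finset.range m, C * ((n : ℝ) + 1) ^ D * a n :=
      Finset.sum_le_sum fun n _ => step2 n
  _ = C * ∑ n ∈ Finset.range m, ((n : ℝ) + 1) ^ D * a n := by
      rw [Finset.mul_sum]
      exact Finset.sum_congr rfl fun n _ => by ring
  _ ≤ C * (Real.sqrt 2 *
        Real.sqrt (∑ n ∈ Finset.range m, (((n : ℝ) + 1) ^ (D + 1) * a n) ^ 2)) :=
      mul_le_mul_of_nonneg_left stepCS hC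
  _ ≤ C * (Real.sqrt 2 * Real.sqrt (l21Norm H (weight S s' f) ^ 2)) := by
      refine mul_le_mul_of_nonneg_left (mul_le_mul_of_nonneg_left ?_ hsqrt2) hC
      exact Real.sqrt_le_sqrt step4
  _ = C * Real.sqrt 2 * l21Norm H (weight S s' f) := by
      rw [Real.sqrt_sq (l21Norm_nonneg H _)]
      ring

end Impl31
/-- equivalent characterizations of the rapid decay property for
the pair `(G, H)`. -/
theorem statement0 {G : Type*} [Group G] (S : Set G) (hfin : S.Finite)
    (hsym : ∀ s ∈ S, s⁻¹ ∈ S) (hgen : Subgroup.closure S = ⊤) (H : Subgroup G) :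
    List.TFAE
      [ (∃ K s : ℝ, 0 ≤ K ∧ 0 ≤ s ∧ ∀ f : G →₀ ℂ,
          hybridOpNorm H f ≤ K * l21Norm H (weight S s f)),
        (∃ C : ℝ, ∃ D : ℕ, 0 ≤ C ∧ ∀ (R : ℕ) (f ϕ : G →₀ ℂ), supportedInBall S R f →
          l21Norm H (conv f ϕ) ≤ C * ((R : ℝ) + 1) ^ D * l21Norm H f * l21Norm H ϕ),
        (∃ C : ℝ, ∃ D : ℕ, 0 ≤ C ∧ ∀ (R : ℕ) (f : G →₀ ℂ), supportedInBall S R f →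
          hybridOpNorm H f ≤ C * ((R : ℝ) + 1) ^ D * l21Norm H f),
        (∃ C : ℝ, ∃ D : ℕ, 0 ≤ C ∧ ∀ (R : ℕ) (f ϕ ψ : G →₀ ℝ),
          (∀ x, 0 ≤ f x) → (∀ x, 0 ≤ ϕ x) → (∀ x, 0 ≤ ψ x) → supportedInBall S R f →
          sumOverSubgroup H (conv (starFun (conv f ϕ)) (starFun ψ)) ≤
            C * ((R : ℝ) + 1) ^ D * l21Norm H f * l21Norm H ϕ * l21Norm H (starFun ψ)) ] := by
  tfae_have 1 → 3 := impl_1_3 H S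
  tfae_have 3 → 1 := impl_3_1 H S
  tfae_have 3 → 2 := impl_3_2 H S
  tfae_have 2 → 3 := impl_2_3 H S
  tfae_have 2 → 4 := impl_2_4 H S
  tfae_have 4 → 2 := impl_4_2 H S
  tfae_finish
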